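/- arXiv:2309.08841 — 3 statements merged into one kernel-verified Lean document; each statement's English description precedes it below -/
import Mathlib

section
/- For every n ≥ ℓ ≥ 1, Σ_{k=1}^{n} (A(n,k)/n!)·(n-k)^ℓ = Σ_{m=0}^{ℓ} ((n-m)/n)·S(ℓ, m), where S(ℓ,m) are the Stirling numbers of the second kind. -/
open Finset Filter

/-- Sequence A000255: A(0)=A(1)=1, A(n)=n·A(n-1)+(n-1)·A(n-2). -/
def A : ℕ → ℕ
  | 0 => 1
  | 1 => 1
  | n + 2 => (n + 2) * A (n + 1) + (n + 1) * A n

/-- A(n,k) := C(n-1,k-1)·A(k-1). -/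
def Ank (n k : ℕ) : ℕ := Nat.choose (n - 1) (k - 1) * A (k - 1)

/-- Stirling numbers of the second kind. -/
def stirling2 : ℕ → ℕ → ℕ
  | 0, 0 => 1
  | 0, _ + 1 => 0
  | _ + 1, 0 => 0
  | n + 1, k + 1 => (k + 1) * stirling2 n (k + 1) + stirling2 n k

lemma sumST (N : ℕ) :
    (∑ j ∈ range (N+1), N.choose j * A j) = (N+1).factorial ∧
    (∑ j ∈ range (N+1), N.choose j * A (j+1)) = (N+1) * (N+1).factorial := by
  induction N with
  | zero => simp [A]
  | succ N ih =>
    obtain ⟨hS, hT⟩ := ih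
    have htail : ∑ i ∈ range (N+1), (N+1).choose (i+1) * A (i+1)
        = ∑ i ∈ range (N+1), N.choose i * A (i+1)
          + ∑ i ∈ range N, N.choose (i+1) * A (i+1) := by
      have h1 : ∑ i ∈ range (N+1), (N+1).choose (i+1) * A (i+1)
          = ∑ i ∈ range (N+1), (N.choose i * A (i+1) + N.choose (i+1) * A (i+1)) := by
        refine sum_congr rfl fun i _ => ?_
        rw [Nat.choose_succ_succ, add_mul]
      rw [h1, sum_add_distrib]
      congr 1
      rw [Finset.sum_range_succ, Nat.choose_succ_self, zero_mul, add_zero]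
    have hSN : ∑ j ∈ range (N+1), N.choose j * A j
        = ∑ i ∈ range N, N.choose (i+1) * A (i+1) + 1 := by
      rw [Finset.sum_range_succ']; simp [A]
    have hSsplit : ∑ j ∈ range (N+2), (N+1).choose j * A j
        = ∑ i ∈ range (N+1), (N+1).choose (i+1) * A (i+1) + 1 := by
      rw [Finset.sum_range_succ']; simp [A]
    have hSnew : ∑ j ∈ range (N+2), (N+1).choose j * A j = (N+2).factorial := by
      rw [hSsplit, htail]
      have h2 : (∑ i ∈ range N, N.choose (i+1) * A (i+1)) + 1 = (N+1).factorial := by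
        rw [← hSN, hS]
      have h3 : (N+2).factorial = (N+1) * (N+1).factorial + (N+1).factorial := by
        rw [Nat.factorial_succ]; ring
      omega
    refine ⟨hSnew, ?_⟩
    have hTsplit : ∑ j ∈ range (N+2), (N+1).choose j * A (j+1)
        = ∑ i ∈ range (N+1), (N+1).choose (i+1) * A (i+2) + 1 := by
      rw [Finset.sum_range_succ']; simp [A]
    have hA2 : ∀ i, A (i+2) = (i+2) * A (i+1) + (i+1) * A i := fun i => rfl
    have hkey : ∀ i, (N+1).choose (i+1) * A (i+2)
        = (N+1) * (N.choose i * A (i+1)) + (N+1) * (N.choose i * A i)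
          + (N+1).choose (i+1) * A (i+1) := by
      intro i
      have hc : (N+1).choose (i+1) * (i+1) = (N+1) * N.choose i := by
        rw [mul_comm (N+1) (N.choose i), ← Nat.add_one_mul_choose_eq]; ring
      calc (N+1).choose (i+1) * A (i+2)
          = ((N+1).choose (i+1) * (i+1)) * A (i+1)
            + ((N+1).choose (i+1) * (i+1)) * A i
            + (N+1).choose (i+1) * A (i+1) := by rw [hA2]; ring
        _ = _ := by rw [hc]; ring
    have hmain : ∑ i ∈ range (N+1), (N+1).choose (i+1) * A (i+2)
        = (N+1) * ((N+1) * (N+1).factorial) + (N+1) * (N+1).factorial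
          + ∑ i ∈ range (N+1), (N+1).choose (i+1) * A (i+1) := by
      rw [Finset.sum_congr rfl (fun i _ => hkey i)]
      rw [sum_add_distrib, sum_add_distrib, ← mul_sum, ← mul_sum, hT, hS]
    have hfin : ∑ i ∈ range (N+1), (N+1).choose (i+1) * A (i+1) + 1 = (N+2).factorial := by
      rw [← hSsplit, hSnew]
    rw [hTsplit, hmain]
    have h4 : (N+1+1) * (N+1+1).factorial
        = (N+1)*((N+1)*(N+1).factorial) + (N+1)*(N+1).factorial + (N+2).factorial := by
      have e : (N+1+1).factorial = (N+2) * (N+1).factorial := rfl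
      rw [e]; ring
    omega

lemma momA : ∀ m N, m ≤ N + 1 →
    ∑ j ∈ range (N+1), N.choose j * A j * (N - j).descFactorial m
      = (N + 1 - m) * N.factorial := by
  intro m
  induction m with
  | zero =>
    intro N _
    simp only [Nat.descFactorial_zero, mul_one, Nat.sub_zero]
    rw [(sumST N).1, Nat.factorial_succ]
  | succ m ih =>
    intro N hm
    match N with
    | 0 =>
      obtain rfl : m = 0 := by omega
      simp [A]
    | K + 1 =>
      have hstep : ∑ j ∈ range (K+2), (K+1).choose j * A j * (K + 1 - j).descFactorial (m+1)
          = ∑ j ∈ range (K+1), (K+1) * (K.choose j * A j * (K - j).descFactorial m) := by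
        rw [Finset.sum_range_succ]
        simp only [Nat.sub_self, Nat.zero_descFactorial_succ, mul_zero, add_zero]
        refine sum_congr rfl fun j hj => ?_
        have hjK : j ≤ K := by simpa [Nat.lt_succ_iff] using hj
        have h1 : K + 1 - j = (K - j) + 1 := by omega
        rw [h1, Nat.succ_descFactorial_succ]
        have hc : (K+1).choose j * (K - j + 1) = (K+1) * K.choose j := by
          have h2 : (K+1).choose j * (K + 1 - j) = (K+1).choose (j+1) * (j+1) :=
            (Nat.choose_succ_right_eq (K+1) j).symm
          rw [h1] at h2
          have h3 : (K+1).choose (j+1) * (j+1) = (K+1) * K.choose j := by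
            rw [mul_comm (K+1) (K.choose j), ← Nat.add_one_mul_choose_eq]
            ring
          omega
        calc (K+1).choose j * A j * ((K - j + 1) * (K - j).descFactorial m)
            = ((K+1).choose j * (K - j + 1)) * (A j * (K - j).descFactorial m) := by ring
          _ = ((K+1) * K.choose j) * (A j * (K - j).descFactorial m) := by rw [hc]
          _ = (K+1) * (K.choose j * A j * (K - j).descFactorial m) := by ring
      rw [hstep, ← Finset.mul_sum, ih K (by omega)]
      have : (K + 1).factorial = (K+1) * K.factorial := rfl
      have h4 : K + 1 + 1 - (m+1) = K + 1 - m := by omega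
      rw [h4, this]; ring

lemma stirling2_eq_zero : ∀ n k, n < k → stirling2 n k = 0 := by
  intro n
  induction n with
  | zero => intro k hk; match k, hk with | k+1, _ => rfl
  | succ n ih =>
    intro k hk
    match k, hk with
    | k+1, hk =>
      show (k + 1) * stirling2 n (k + 1) + stirling2 n k = 0
      rw [ih (k+1) (by omega), ih k (by omega)]; ring

lemma mul_descFactorial (x m : ℕ) :
    x * x.descFactorial m = x.descFactorial (m+1) + m * x.descFactorial m := by
  rw [Nat.descFactorial_succ]
  rcases le_or_gt m x with h | h
  · have : x = (x - m) + m := by omega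
    nth_rewrite 1 [this]; ring
  · rw [Nat.descFactorial_eq_zero_iff_lt.2 h]; ring

lemma pow_eq_sum_stirling (x : ℕ) : ∀ ℓ : ℕ,
    x ^ ℓ = ∑ m ∈ range (ℓ+1), stirling2 ℓ m * x.descFactorial m := by
  intro ℓ
  induction ℓ with
  | zero => simp [stirling2]
  | succ ℓ ih =>
    have step : x ^ (ℓ+1)
        = ∑ m ∈ range (ℓ+1), stirling2 ℓ m * x.descFactorial (m+1)
          + ∑ m ∈ range (ℓ+1), m * (stirling2 ℓ m * x.descFactorial m) := by
      rw [pow_succ, ih, Finset.sum_mul, ← sum_add_distrib]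
      refine sum_congr rfl fun m _ => ?_
      calc stirling2 ℓ m * x.descFactorial m * x
          = stirling2 ℓ m * (x * x.descFactorial m) := by ring
        _ = stirling2 ℓ m * (x.descFactorial (m+1) + m * x.descFactorial m) := by
            rw [mul_descFactorial]
        _ = _ := by ring
    have h2 : ∑ m ∈ range (ℓ+1), m * (stirling2 ℓ m * x.descFactorial m)
        = ∑ i ∈ range (ℓ+1), (i+1) * stirling2 ℓ (i+1) * x.descFactorial (i+1) := by
      rw [Finset.sum_range_succ', Finset.sum_range_succ]
      rw [stirling2_eq_zero ℓ (ℓ+1) (by omega)]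
      simp; refine sum_congr rfl fun i _ => ?_; ring
    have h3 : ∑ m ∈ range (ℓ+2), stirling2 (ℓ+1) m * x.descFactorial m
        = ∑ i ∈ range (ℓ+1), stirling2 (ℓ+1) (i+1) * x.descFactorial (i+1) := by
      rw [Finset.sum_range_succ']
      have : stirling2 (ℓ+1) 0 = 0 := rfl
      rw [this, zero_mul, add_zero]
    rw [step, h2, h3, ← sum_add_distrib]
    refine (sum_congr rfl fun i _ => ?_).symm
    show ((i + 1) * stirling2 ℓ (i + 1) + stirling2 ℓ i) * x.descFactorial (i+1) = _
    ring

lemma keyNat (n ℓ : ℕ) (hn : 1 ≤ n) (hℓn : ℓ ≤ n) :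
    ∑ j ∈ range n, (n-1).choose j * A j * ((n-1-j)^ℓ)
      = ∑ m ∈ range (ℓ+1), (n - m) * stirling2 ℓ m * (n-1).factorial := by
  obtain ⟨N, rfl⟩ : ∃ N, n = N+1 := ⟨n-1, by omega⟩
  simp only [Nat.add_sub_cancel]
  calc ∑ j ∈ range (N+1), N.choose j * A j * (N-j)^ℓ
      = ∑ j ∈ range (N+1), ∑ m ∈ range (ℓ+1),
          stirling2 ℓ m * (N.choose j * A j * (N-j).descFactorial m) := by
        refine sum_congr rfl fun j _ => ?_
        rw [pow_eq_sum_stirling (N-j) ℓ, Finset.mul_sum]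
        exact sum_congr rfl fun m _ => by ring
    _ = ∑ m ∈ range (ℓ+1), stirling2 ℓ m
          * ∑ j ∈ range (N+1), N.choose j * A j * (N-j).descFactorial m := by
        rw [Finset.sum_comm]
        exact sum_congr rfl fun m _ => (Finset.mul_sum _ _ _).symm
    _ = ∑ m ∈ range (ℓ+1), stirling2 ℓ m * ((N+1-m) * N.factorial) := by
        refine sum_congr rfl fun m hm => ?_
        rw [momA m N (by simp only [Finset.mem_range] at hm; omega)]
    _ = _ := sum_congr rfl fun m _ => by ring

theorem stmt6 (ℓ n : ℕ) (hℓ : 1 ≤ ℓ) (hℓn : ℓ ≤ n) :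
    ∑ k ∈ Finset.Icc 1 n, (Ank n k : ℝ) / (Nat.factorial n) * ((n - k : ℕ) : ℝ) ^ ℓ =
      ∑ m ∈ Finset.range (ℓ + 1), ((n - m : ℕ) : ℝ) / n * (stirling2 ℓ m : ℝ) := by
  have hn : 1 ≤ n := le_trans hℓ hℓn
  have key := keyNat n ℓ hn hℓn
  have hfacpos : (0:ℝ) < (Nat.factorial n : ℝ) := by
    exact_mod_cast Nat.factorial_pos n
  have hnpos : (0:ℝ) < (n:ℝ) := by exact_mod_cast hn
  have hnfac : ((Nat.factorial n : ℕ) : ℝ) = (n:ℝ) * ((n-1).factorial : ℝ) := by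
    obtain ⟨N, rfl⟩ : ∃ N, n = N+1 := ⟨n-1, by omega⟩
    rw [Nat.factorial_succ]
    push_cast [Nat.add_sub_cancel]
    ring
  calc ∑ k ∈ Finset.Icc 1 n, (Ank n k : ℝ) / (Nat.factorial n) * ((n - k : ℕ) : ℝ) ^ ℓ
      = ((∑ j ∈ range n, (n-1).choose j * A j * ((n-1-j)^ℓ) : ℕ) : ℝ)
          / (Nat.factorial n : ℝ) := by
        rw [← Finset.Ico_add_one_right_eq_Icc, Finset.sum_Ico_eq_sum_range]
        have hr : n + 1 - 1 = n := rfl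
        rw [hr]
        push_cast
        rw [Finset.sum_div]
        refine sum_congr rfl fun i _ => ?_
        have e1 : Ank n (1+i) = (n-1).choose i * A i := by
          have : 1 + i - 1 = i := by omega
          unfold Ank
          rw [this]
        have e2 : n - (1+i) = n - 1 - i := by omega
        rw [e1, e2]
        push_cast
        ring
    _ = ((∑ m ∈ range (ℓ+1), (n - m) * stirling2 ℓ m * (n-1).factorial : ℕ) : ℝ)
          / (Nat.factorial n : ℝ) := by rw [key]
    _ = _ := by
        push_cast
        rw [Finset.sum_div]
        refine sum_congr rfl fun m _ => ?_
        rw [hnfac]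
        have hf1 : ((n-1).factorial : ℝ) ≠ 0 := by
          exact_mod_cast (Nat.factorial_pos (n-1)).ne'
        field_simp
end

section
/- For every n ≥ 0, A(n) = ⌊(n+2)·n!/e + 1/2⌋, i.e., A(n) is the nearest integer to (n+2)·n!/e. -/
open Finset Filter

lemma A_eq_derangements (n : ℕ) : (n + 1) * A n = numDerangements (n + 2) := by
  induction n using Nat.strong_induction_on with
  | _ n ih =>
    match n with
    | 0 => rfl
    | 1 => rfl
    | (m + 2) =>
      have h1 := ih (m + 1) (by omega)
      have h0 := ih m (by omega)
      rw [numDerangements_add_two, ← h1, ← h0]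
      show (m + 3) * A (m + 2) = _
      show (m + 3) * ((m + 2) * A (m + 1) + (m + 1) * A m) = _
      ring

lemma derangements_eq_sum (n : ℕ) : (numDerangements n : ℝ) =
    n.factorial * ∑ k ∈ Finset.range (n + 1), (-1 : ℝ) ^ k / k.factorial := by
  have key : (numDerangements n : ℝ) / n.factorial =
      ∑ k ∈ Finset.range (n + 1), (-1 : ℝ) ^ k / k.factorial := by
    rw [← Int.cast_natCast, numDerangements_sum]
    push_cast
    rw [Finset.sum_div]
    refine Finset.sum_congr rfl ?_
    intro k hk
    have h_le : k ≤ n := Finset.mem_range_succ_iff.mp hk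
    rw [Nat.ascFactorial_eq_div, add_tsub_cancel_of_le h_le]
    push_cast [Nat.factorial_dvd_factorial h_le]
    field_simp [Nat.factorial_ne_zero]
  have hf : (n.factorial : ℝ) ≠ 0 := by positivity
  field_simp at key
  linarith [key]

theorem stmt9 (n : ℕ) :
    (A n : ℤ) = ⌊((n + 2 : ℝ) * (Nat.factorial n) / Real.exp 1 + 1 / 2)⌋ := by
  -- Set m = n + 2; δ = (n+2)!·exp(-1) − (n+1)·A n, |δ| < 1/2.
  have hA : ((n : ℝ) + 1) * A n = numDerangements (n + 2) := by
    have := A_eq_derangements n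
    exact_mod_cast congrArg (Nat.cast : ℕ → ℝ) this
  set S : ℝ := ∑ k ∈ Finset.range (n + 3), (-1 : ℝ) ^ k / k.factorial with hS
  have hsum : (numDerangements (n + 2) : ℝ) = (n + 2).factorial * S := by
    have h := derangements_eq_sum (n + 2)
    rw [show n + 2 + 1 = n + 3 from rfl] at h
    exact h
  have hbound : |Real.exp (-1) - S| ≤ ((n : ℝ) + 4) / ((n + 3).factorial * (n + 3)) := by
    have h := Real.exp_bound (x := -1) (by norm_num) (n := n + 3) (by omega)
    have : ((n : ℝ) + 3 + 1) / ((n + 3).factorial * (n + 3)) = ((n : ℝ) + 4) / ((n + 3).factorial * (n + 3)) := by ring_nf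
    rw [← this]
    simpa [hS, abs_neg, one_pow, Nat.succ_eq_add_one] using h
  have hfact3 : ((n + 3 : ℕ).factorial : ℝ) = (n + 3) * (n + 2).factorial := by
    rw [show n + 3 = (n + 2) + 1 by rfl, Nat.factorial_succ]
    push_cast; ring
  have hfpos : (0 : ℝ) < (n + 2).factorial := by positivity
  have hδ : |((n + 2).factorial : ℝ) * Real.exp (-1) - ((n : ℝ) + 1) * A n| < 1 / 2 := by
    rw [hA, hsum, ← mul_sub, abs_mul, abs_of_pos hfpos]
    have h2 : ((n + 2).factorial : ℝ) * |Real.exp (-1) - S|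
        ≤ ((n + 2).factorial : ℝ) * (((n : ℝ) + 4) / ((n + 3).factorial * (n + 3))) :=
      mul_le_mul_of_nonneg_left hbound (le_of_lt hfpos)
    refine lt_of_le_of_lt h2 ?_
    rw [hfact3]
    have hne : ((n : ℝ) + 3) ≠ 0 := by positivity
    have : ((n + 2).factorial : ℝ) * (((n : ℝ) + 4) / (((n : ℝ) + 3) * (n + 2).factorial * ((n : ℝ) + 3)))
        = ((n : ℝ) + 4) / (((n : ℝ) + 3) * ((n : ℝ) + 3)) := by
      field_simp
    rw [this]
    rw [div_lt_iff₀ (by positivity)]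
    nlinarith [sq_nonneg ((n : ℝ))]
  -- main computation
  have hexp : Real.exp 1 ≠ 0 := Real.exp_ne_zero 1
  have hx : ((n : ℝ) + 2) * (Nat.factorial n) = ((n + 2).factorial : ℝ) / ((n : ℝ) + 1) := by
    have : ((n + 2).factorial : ℝ) = ((n : ℝ) + 2) * ((n : ℝ) + 1) * (Nat.factorial n) := by
      rw [show n + 2 = (n + 1) + 1 by rfl, Nat.factorial_succ, Nat.factorial_succ]
      push_cast; ring
    rw [this]
    field_simp
  have hn1 : (0 : ℝ) < (n : ℝ) + 1 := by positivity
  have hinv : Real.exp (-1) = 1 / Real.exp 1 := by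
    rw [Real.exp_neg]; exact inv_eq_one_div _
  have hkey : ((n + 2).factorial : ℝ) / (((n : ℝ) + 1) * Real.exp 1)
      = ((n + 2).factorial : ℝ) * Real.exp (-1) * ((n : ℝ) + 1)⁻¹ := by
    rw [Real.exp_neg]
    field_simp
  symm
  rw [Int.floor_eq_iff]
  push_cast
  rw [hx, div_div, hkey]
  set E : ℝ := ((n + 2).factorial : ℝ) * Real.exp (-1) with hE
  have h1 : ((n : ℝ) + 1) * A n - 1/2 < E := by linarith [(abs_lt.mp hδ).1]
  have h2 : E < ((n : ℝ) + 1) * A n + 1/2 := by linarith [(abs_lt.mp hδ).2]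
  have hinvpos : (0 : ℝ) < ((n : ℝ) + 1)⁻¹ := by positivity
  have hmul : ((n : ℝ) + 1) * ((n : ℝ) + 1)⁻¹ = 1 := mul_inv_cancel₀ (ne_of_gt hn1)
  constructor
  · have := mul_lt_mul_of_pos_right h1 hinvpos
    have hAe : (((n : ℝ) + 1) * A n - 1/2) * ((n : ℝ) + 1)⁻¹
        = (A n : ℝ) - (1/2) * ((n : ℝ) + 1)⁻¹ := by
      field_simp
    rw [hAe] at this
    have hle : (1/2 : ℝ) * ((n : ℝ) + 1)⁻¹ ≤ 1/2 := by
      have : ((n : ℝ) + 1)⁻¹ ≤ 1 := by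
        rw [inv_le_one_iff₀]; right; linarith
      nlinarith
    linarith
  · have := mul_lt_mul_of_pos_right h2 hinvpos
    have hAe : (((n : ℝ) + 1) * A n + 1/2) * ((n : ℝ) + 1)⁻¹
        = (A n : ℝ) + (1/2) * ((n : ℝ) + 1)⁻¹ := by
      field_simp
    rw [hAe] at this
    have hle : (1/2 : ℝ) * ((n : ℝ) + 1)⁻¹ ≤ 1/2 := by
      have : ((n : ℝ) + 1)⁻¹ ≤ 1 := by
        rw [inv_le_one_iff₀]; right; linarith
      nlinarith
    linarith
end

section
/- For every n ≥ 1 and every z, Σ_{t=1}^{n} S_n(t)·z^t = z^n + Σ_{m=1}^{n-1} ((n-m)/(n·m!))·z^{n-m}·(1-z)^{m-1}, where S_n(t) := Σ_{k=1}^{t} A(n,k)/n!. -/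
open Finset Filter

noncomputable def Fs (n : ℕ) : ℝ :=
  ∑ j ∈ range (n+1), (-1:ℝ)^j * ((n:ℝ)+1-j) * (Nat.factorial n) / (Nat.factorial j)

noncomputable def Gs (n : ℕ) : ℝ :=
  ∑ j ∈ range (n+1), (-1:ℝ)^j * (Nat.factorial n) / (Nat.factorial j)

lemma Gs_succ (n : ℕ) : Gs (n+1) = (n+1) * Gs n + (-1)^(n+1) := by
  unfold Gs
  rw [sum_range_succ, Finset.mul_sum]
  congr 1
  · exact Finset.sum_congr rfl fun j hj => by
      rw [Nat.factorial_succ]; push_cast; ring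
  · rw [mul_div_assoc, div_self (by positivity), mul_one]

lemma Fs_succ (n : ℕ) : Fs (n+1) = (n+1) * Fs n + Gs (n+1) := by
  unfold Fs Gs
  have h : ∀ j ∈ range (n+2),
      (-1:ℝ)^j * ((((n:ℕ)+1:ℕ):ℝ)+1-(j:ℝ)) * (Nat.factorial (n+1)) / (Nat.factorial j)
      = (-1:ℝ)^j * ((n:ℝ)+1-(j:ℝ)) * (((n:ℝ)+1) * (Nat.factorial n)) / (Nat.factorial j)
        + (-1:ℝ)^j * (Nat.factorial (n+1)) / (Nat.factorial j) := by
    intro j hj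
    rw [Nat.factorial_succ]
    push_cast
    ring
  rw [Finset.sum_congr rfl h, Finset.sum_add_distrib, sum_range_succ]
  have hz : ((-1:ℝ)^(n+1) * ((n:ℝ)+1-(((n+1:ℕ)):ℝ)) * (((n:ℝ)+1) * (Nat.factorial n)) / (Nat.factorial (n+1))) = 0 := by
    have h0 : ((n:ℝ)+1-(((n+1:ℕ)):ℝ)) = 0 := by push_cast; ring
    rw [h0]; ring
  rw [hz, add_zero, Finset.mul_sum]
  congr 1
  exact Finset.sum_congr rfl fun j hj => by ring

lemma GFs (n : ℕ) : Gs (n+2) = (n+1) * Fs n := by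
  induction n with
  | zero =>
    unfold Gs Fs
    norm_num [Finset.sum_range_succ]
  | succ n ih =>
    have h4 := Gs_succ (n+2)
    have h3 := Gs_succ (n+1)
    have hF := Fs_succ n
    push_cast at h4 h3 hF ⊢
    linear_combination h4 + h3 + ((n:ℝ)+2) * ih - ((n:ℝ)+2) * hF

lemma A_eq (n : ℕ) : (A n : ℝ) = Fs n := by
  induction n using Nat.twoStepInduction with
  | zero => unfold Fs; norm_num [A]
  | one => unfold Fs; norm_num [A, Finset.sum_range_succ]
  | more n ih2 ih1 =>
    have h1 : (A (n+2) : ℝ) = (n+2) * A (n+1) + (n+1) * A n := by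
      rw [show A (n+2) = (n+2) * A (n+1) + (n+1) * A n from rfl]; push_cast; ring
    have hF := Fs_succ (n+1)
    have hG := GFs n
    simp only [show n+1+1 = n+2 by omega] at hF
    rw [h1, ih1, ih2]
    push_cast at hF hG ⊢
    linear_combination -hF - hG

lemma step2 (n k : ℕ) (hk : 1 ≤ k) (hkn : k ≤ n) :
    (Ank n k : ℝ) / (Nat.factorial n) =
    ∑ j ∈ range k, (-1:ℝ)^j * ((k-j : ℕ):ℝ) / ((n:ℝ) * Nat.factorial j * Nat.factorial (n-k)) := by
  obtain ⟨p, rfl⟩ : ∃ p, n = p+1 := ⟨n-1, by omega⟩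
  obtain ⟨q, rfl⟩ : ∃ q, k = q+1 := ⟨k-1, by omega⟩
  have hqp : q ≤ p := by omega
  unfold Ank
  simp only [Nat.add_sub_cancel]
  rw [Nat.cast_mul, A_eq q, Fs, Finset.mul_sum, Finset.sum_div]
  refine Finset.sum_congr rfl fun j hj => ?_
  rw [Finset.mem_range] at hj
  have hj' : j ≤ q := by omega
  have hch : ((p.choose q : ℕ) : ℝ)
      = (Nat.factorial p) / (Nat.factorial q * Nat.factorial (p - q)) := Nat.cast_choose ℝ hqp
  have hsub : ((q+1-j : ℕ):ℝ) = (q:ℝ)+1-j := by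
    push_cast [Nat.cast_sub (by omega : j ≤ q+1)]; ring
  have hsub2 : p + 1 - (q+1) = p - q := by omega
  have hfac : (Nat.factorial (p+1) : ℝ) = ((p:ℝ)+1) * Nat.factorial p := by
    rw [Nat.factorial_succ]; push_cast; ring
  rw [hch, hsub, hsub2, hfac]
  have h1 : (Nat.factorial p : ℝ) ≠ 0 := by positivity
  have h2 : (Nat.factorial q : ℝ) ≠ 0 := by positivity
  have h3 : (Nat.factorial j : ℝ) ≠ 0 := by positivity
  have h4 : (Nat.factorial (p-q) : ℝ) ≠ 0 := by positivity
  have h5 : ((p:ℝ)+1) ≠ 0 := by positivity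
  field_simp
  push_cast
  ring

lemma starId (n : ℕ) (hn : 1 ≤ n) (z : ℝ) :
    ∑ k ∈ Icc 1 n, (Ank n k : ℝ) / (Nat.factorial n) * z^k
    = ∑ m ∈ range n, ((n-m : ℕ):ℝ) / ((n:ℝ) * Nat.factorial m) * z^(n-m) * (1-z)^m := by
  have hL : ∀ k ∈ Icc 1 n, (Ank n k : ℝ)/(Nat.factorial n) * z^k
      = ∑ j ∈ range k, (-1:ℝ)^j * ((k-j:ℕ):ℝ) / ((n:ℝ) * Nat.factorial j * Nat.factorial (n-k)) * z^k := by
    intro k hk; rw [mem_Icc] at hk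
    rw [step2 n k hk.1 hk.2, Finset.sum_mul]
  have hR : ∀ m ∈ range n, ((n-m:ℕ):ℝ)/((n:ℝ) * Nat.factorial m) * z^(n-m) * (1-z)^m
      = ∑ i ∈ range (m+1), ((n-m:ℕ):ℝ)/((n:ℝ) * Nat.factorial m) * z^(n-m)
          * ((-1:ℝ)^(i+m) * 1^i * z^(m-i) * (m.choose i)) := by
    intro m hm
    rw [sub_pow, Finset.mul_sum]
  rw [Finset.sum_congr rfl hL, Finset.sum_congr rfl hR,
    Finset.sum_sigma', Finset.sum_sigma']
  refine Finset.sum_nbij' (fun x => ⟨n - x.1 + x.2, n - x.1⟩) (fun x => ⟨n - x.2, x.1 - x.2⟩)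
    ?_ ?_ ?_ ?_ ?_
  · rintro ⟨k,j⟩ h
    simp only [Finset.mem_sigma, Finset.mem_Icc, Finset.mem_range] at h ⊢
    omega
  · rintro ⟨m,i⟩ h
    simp only [Finset.mem_sigma, Finset.mem_Icc, Finset.mem_range] at h ⊢
    omega
  · rintro ⟨k,j⟩ h
    simp only [Finset.mem_sigma, Finset.mem_Icc, Finset.mem_range] at h
    dsimp only
    rw [show n-(n-k) = k by omega, show n-k+j-(n-k) = j by omega]
  · rintro ⟨m,i⟩ h
    simp only [Finset.mem_sigma, Finset.mem_Icc, Finset.mem_range] at h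
    dsimp only
    rw [show n-(n-i) = i by omega, show i+(m-i) = m by omega]
  · rintro ⟨k,j⟩ h
    simp only [Finset.mem_sigma, Finset.mem_Icc, Finset.mem_range] at h
    obtain ⟨⟨hk1, hkn⟩, hjk⟩ := h
    have e1 : n - (n - k + j) = k - j := by omega
    have e2 : n - k + j - (n - k) = j := by omega
    have e3 : (n-k) + (n-k+j) = 2*(n-k) + j := by omega
    simp only [e1, e2, e3]
    have hpow : ((-1:ℝ))^(2*(n-k)+j) = (-1)^j := by
      rw [pow_add, pow_mul]; norm_num
    rw [hpow]
    have hch : (((n-k+j).choose (n-k) : ℕ) : ℝ)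
        = (Nat.factorial (n-k+j)) / (Nat.factorial (n-k) * Nat.factorial j) := by
      have := Nat.cast_choose ℝ (by omega : n-k ≤ n-k+j)
      rwa [show n-k+j - (n-k) = j by omega] at this
    rw [hch]
    have hz : z^(k-j) * z^j = z^k := by
      rw [← pow_add]; congr 1; omega
    have h1 : (Nat.factorial (n-k+j) : ℝ) ≠ 0 := by positivity
    have h2 : (Nat.factorial (n-k) : ℝ) ≠ 0 := by positivity
    have h3 : (Nat.factorial j : ℝ) ≠ 0 := by positivity
    have h5 : ((n:ℝ)) ≠ 0 := Nat.cast_ne_zero.mpr (by omega)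
    rw [← hz]
    field_simp
    ring
lemma geom_Icc (k n : ℕ) (hk : k ≤ n) (z : ℝ) :
    (1-z) * ∑ t ∈ Icc k n, z^t = z^k - z^(n+1) := by
  rw [← Finset.Ico_add_one_right_eq_Icc, Finset.sum_Ico_eq_sub _ (by omega : k ≤ n+1)]
  have h1 := geom_sum_mul z (n+1)
  have h2 := geom_sum_mul z k
  linear_combination h2 - h1

lemma hone (n : ℕ) (hn : 1 ≤ n) : ∑ k ∈ Icc 1 n, (Ank n k : ℝ) / (Nat.factorial n) = 1 := by
  have hn0 : (n:ℝ) ≠ 0 := Nat.cast_ne_zero.mpr (by omega)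
  have h := starId n hn 1
  rw [Finset.sum_eq_single_of_mem 0 (Finset.mem_range.mpr (by omega))] at h
  · simp only [one_pow, mul_one, Nat.sub_zero, Nat.factorial_zero, Nat.cast_one, sub_self,
      pow_zero] at h
    rw [div_self hn0] at h
    simpa using h
  · intro b _ hb
    simp [sub_self, zero_pow hb]

theorem stmt11 (n : ℕ) (hn : 1 ≤ n) (z : ℝ) :
    ∑ t ∈ Finset.Icc 1 n,
        (∑ k ∈ Finset.Icc 1 t, (Ank n k : ℝ) / (Nat.factorial n)) * z ^ t =
      z ^ n + ∑ m ∈ Finset.Icc 1 (n - 1),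
        ((n - m : ℕ) : ℝ) / (n * Nat.factorial m) * z ^ (n - m) * (1 - z) ^ (m - 1) := by
  have hn0 : (n:ℝ) ≠ 0 := Nat.cast_ne_zero.mpr (by omega)
  set L : ℝ → ℝ := fun w => ∑ t ∈ Finset.Icc 1 n,
        (∑ k ∈ Finset.Icc 1 t, (Ank n k : ℝ) / (Nat.factorial n)) * w ^ t with hLdef
  set R : ℝ → ℝ := fun w => w ^ n + ∑ m ∈ Finset.Icc 1 (n - 1),
        ((n - m : ℕ) : ℝ) / (n * Nat.factorial m) * w ^ (n - m) * (1 - w) ^ (m - 1) with hRdef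
  have key : ∀ w : ℝ, (1-w) * L w = (1-w) * R w := by
    intro w
    have hswap : L w = ∑ k ∈ Icc 1 n, ∑ t ∈ Icc k n, (Ank n k : ℝ)/(Nat.factorial n) * w^t := by
      have hc := sum_Ico_Ico_comm 1 (n+1) (fun k t => (Ank n k : ℝ)/(Nat.factorial n) * w^t)
      simp only [Finset.Ico_add_one_right_eq_Icc] at hc
      rw [hLdef]
      simp only
      rw [show (∑ t ∈ Finset.Icc 1 n, (∑ k ∈ Finset.Icc 1 t, (Ank n k : ℝ) / (Nat.factorial n)) * w ^ t)
          = ∑ t ∈ Finset.Icc 1 n, ∑ k ∈ Finset.Icc 1 t, (Ank n k : ℝ) / (Nat.factorial n) * w ^ t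
          from Finset.sum_congr rfl fun t _ => Finset.sum_mul _ _ _]
      exact hc.symm
    have hLs : (1-w) * L w = (∑ k ∈ Icc 1 n, (Ank n k : ℝ)/(Nat.factorial n) * w^k) - w^(n+1) := by
      rw [hswap, Finset.mul_sum]
      have : ∀ k ∈ Icc 1 n, (1-w) * ∑ t ∈ Icc k n, (Ank n k : ℝ)/(Nat.factorial n) * w^t
          = (Ank n k : ℝ)/(Nat.factorial n) * w^k - (Ank n k : ℝ)/(Nat.factorial n) * w^(n+1) := by
        intro k hk
        rw [mem_Icc] at hk
        rw [← Finset.mul_sum, show (1-w) * ((Ank n k : ℝ)/(Nat.factorial n) * ∑ t ∈ Icc k n, w^t)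
            = (Ank n k : ℝ)/(Nat.factorial n) * ((1-w) * ∑ t ∈ Icc k n, w^t) by ring,
          geom_Icc k n hk.2 w]
        ring
      rw [Finset.sum_congr rfl this, Finset.sum_sub_distrib, ← Finset.sum_mul, hone n hn]
      ring
    have hsplit : ∑ m ∈ range n, ((n-m : ℕ):ℝ) / ((n:ℝ) * Nat.factorial m) * w^(n-m) * (1-w)^m
        = w^n + ∑ m ∈ Icc 1 (n-1), ((n-m : ℕ):ℝ) / ((n:ℝ) * Nat.factorial m) * w^(n-m) * (1-w)^m := by
      have hins : range n = insert 0 (Icc 1 (n-1)) := by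
        ext x; simp only [Finset.mem_range, Finset.mem_insert, Finset.mem_Icc]; omega
      rw [hins, Finset.sum_insert (by simp)]
      congr 1
      simp only [Nat.sub_zero, Nat.factorial_zero, Nat.cast_one, pow_zero, mul_one]
      rw [div_self hn0, one_mul]
    have hRs : (1-w) * R w = (∑ k ∈ Icc 1 n, (Ank n k : ℝ)/(Nat.factorial n) * w^k) - w^(n+1) := by
      rw [hRdef]
      simp only
      rw [mul_add, Finset.mul_sum]
      have : ∀ m ∈ Icc 1 (n-1), (1-w) * (((n-m : ℕ):ℝ) / ((n:ℝ) * Nat.factorial m) * w^(n-m) * (1-w)^(m-1))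
          = ((n-m : ℕ):ℝ) / ((n:ℝ) * Nat.factorial m) * w^(n-m) * (1-w)^m := by
        intro m hm
        rw [mem_Icc] at hm
        rw [show (1-w) * (((n-m : ℕ):ℝ) / ((n:ℝ) * Nat.factorial m) * w^(n-m) * (1-w)^(m-1))
            = ((n-m : ℕ):ℝ) / ((n:ℝ) * Nat.factorial m) * w^(n-m) * ((1-w)^(m-1) * (1-w)) by ring,
          ← pow_succ, show m-1+1 = m by omega]
      rw [Finset.sum_congr rfl this]
      linear_combination -hsplit - (starId n hn w)
    rw [hLs, hRs]
  have heq : Set.EqOn L R {(1:ℝ)}ᶜ := by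
    intro w hw
    have hw1 : (1:ℝ) - w ≠ 0 := sub_ne_zero.mpr (Ne.symm hw)
    exact mul_left_cancel₀ hw1 (key w)
  have hcL : Continuous L := by
    apply continuous_finset_sum
    intro t _
    exact continuous_const.mul (continuous_pow t)
  have hcR : Continuous R := by
    apply (continuous_pow n).add
    apply continuous_finset_sum
    intro m _
    exact ((continuous_const.mul (continuous_pow _)).mul
      ((continuous_const.sub continuous_id).pow _))
  have := Continuous.ext_on (dense_compl_singleton (1:ℝ)) hcL hcR heq
  exact congrFun this z
end
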